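/- The infinite word u = lim u_i is uniformly recurrent: for every n there exists N such that every factor of u of length N contains every factor of u of length n. -/

import Mathlib

/-- The `k`-th power of a finite word `w` (concatenation of `k` copies). -/
def wpow (w : List Bool) (k : ℕ) : List Bool := (List.replicate k w).flatten

/-- The pair of words `(u_i, v_i)`:  `u_0 = 0`, `v_0 = 1`,
`u_{i+1} = u_i^{m_i} v_i^{l_i}`, `v_{i+1} = u_i^{m_i} v_i^{n_i}`. -/
def uvSeq (l m n : ℕ → ℕ) : ℕ → List Bool × List Bool
  | 0 => ([false], [true])
  | i + 1 =>
      (wpow (uvSeq l m n i).1 (m i) ++ wpow (uvSeq l m n i).2 (l i),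
       wpow (uvSeq l m n i).1 (m i) ++ wpow (uvSeq l m n i).2 (n i))

/-- The substitution `σ_h` : `0 ↦ 0^{m_h} 1^{l_h}`, `1 ↦ 0^{m_h} 1^{n_h}`. -/
def subw (l m n : ℕ → ℕ) (h : ℕ) (w : List Bool) : List Bool :=
  w.flatMap fun c => List.replicate (m h) false ++ List.replicate (if c then n h else l h) true

/-- `wordIter i h = σ_h σ_{h+1} ⋯ σ_{h+i-1}(0)`. -/
def wordIter (l m n : ℕ → ℕ) : ℕ → ℕ → List Bool
  | 0, _ => [false]
  | i + 1, h => subw l m n h (wordIter l m n i (h + 1))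

/-- The infinite word `u^{(h)} = lim_i σ_h ⋯ σ_{h+i-1}(0)`. -/
def limWord (l m n : ℕ → ℕ) (h : ℕ) (k : ℕ) : Bool :=
  (wordIter l m n (k + 1) h).getD k false

/-- `w` is a factor of the infinite word `U`. -/
def IsFactor (U : ℕ → Bool) (w : List Bool) : Prop :=
  ∃ k, w = (List.range w.length).map fun j => U (k + j)

/-- `σ_0 σ_1 ⋯ σ_{h+i-1}` starting at `h`, applied to `w`. -/
def subComp (l m n : ℕ → ℕ) : ℕ → ℕ → List Bool → List Bool
  | 0, _, w => w
  | i + 1, h, w => subw l m n h (subComp l m n i (h + 1) w)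

/-- `\hat{σ}_h(w) = 1^{l_h} σ_h(w) 0^{m_h} 1^{l_h}`. -/
def hatw (l m n : ℕ → ℕ) (h : ℕ) (w : List Bool) : List Bool :=
  List.replicate (l h) true ++ subw l m n h w ++
    List.replicate (m h) false ++ List.replicate (l h) true

/-- `hatComp i h w = \hat{σ}_h ⋯ \hat{σ}_{h+i-1}(w)`. -/
def hatComp (l m n : ℕ → ℕ) : ℕ → ℕ → List Bool → List Bool
  | 0, _, w => w
  | i + 1, h, w => hatw l m n h (hatComp l m n i (h + 1) w)

/-- The complexity function of the infinite word `U`. -/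
noncomputable def complexityFn (U : ℕ → Bool) (nn : ℕ) : ℕ :=
  Set.ncard {w : List Bool | w.length = nn ∧ IsFactor U w}

section Aux

variable (l m n : ℕ → ℕ)

lemma subw_append (h : ℕ) (a b : List Bool) :
    subw l m n h (a ++ b) = subw l m n h a ++ subw l m n h b :=
  List.flatMap_append

lemma subw_prefix (h : ℕ) {a b : List Bool} (hab : a <+: b) :
    subw l m n h a <+: subw l m n h b := by
  obtain ⟨t, rfl⟩ := hab
  exact ⟨subw l m n h t, (subw_append l m n h a t).symm⟩

variable (hlpos : ∀ i, 0 < l i) (hlm : ∀ i, l i < m i)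

include hlpos hlm

lemma length_subw (h : ℕ) (w : List Bool) :
    2 * w.length ≤ (subw l m n h w).length := by
  induction w with
  | nil => simp [subw]
  | cons c t ih =>
    have h1 := hlpos h
    have h2 := hlm h
    simp only [subw, List.flatMap_cons, List.length_append, List.length_replicate,
      List.length_cons] at ih ⊢
    omega

lemma length_wordIter (i : ℕ) : ∀ h : ℕ, i + 1 ≤ (wordIter l m n i h).length := by
  induction i with
  | zero => intro h; simp [wordIter]
  | succ i ih =>
    intro h
    have h1 := ih (h + 1)
    have h2 := length_subw l m n hlpos hlm h (wordIter l m n i (h + 1))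
    simp only [wordIter]
    omega

lemma wordIter_prefix_succ (i : ℕ) : ∀ h : ℕ,
    wordIter l m n i h <+: wordIter l m n (i + 1) h := by
  induction i with
  | zero =>
    intro h
    refine ⟨List.replicate (m h - 1) false ++ List.replicate (l h) true, ?_⟩
    have hm : m h = 1 + (m h - 1) := by have := hlpos h; have := hlm h; omega
    simp only [wordIter, subw, List.flatMap_cons, List.flatMap_nil, List.append_nil]
    rw [hm, List.replicate_add]
    simp
  | succ i ih =>
    intro h
    exact subw_prefix l m n h (ih (h + 1))

lemma wordIter_prefix_le {i j : ℕ} (hij : i ≤ j) (h : ℕ) :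
    wordIter l m n i h <+: wordIter l m n j h := by
  induction j, hij using Nat.le_induction with
  | base => exact List.prefix_rfl
  | succ j hij ih => exact ih.trans (wordIter_prefix_succ l m n hlpos hlm j h)

lemma limWord_eq (h k p : ℕ) (hk : k < (wordIter l m n p h).length) :
    limWord l m n h k = (wordIter l m n p h).getD k false := by
  unfold limWord
  rcases le_total p (k + 1) with hp | hp
  · obtain ⟨t, ht⟩ := wordIter_prefix_le l m n hlpos hlm hp h
    rw [← ht, List.getD_append _ _ _ _ hk]
  · obtain ⟨t, ht⟩ := wordIter_prefix_le l m n hlpos hlm hp h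
    have hk' : k < (wordIter l m n (k + 1) h).length := by
      have := length_wordIter l m n hlpos hlm (k + 1) h; omega
    rw [← ht, List.getD_append _ _ _ _ hk']

lemma factor_infix {w : List Bool} {k : ℕ}
    (hk : w = (List.range w.length).map fun j => limWord l m n 0 (k + j))
    (p : ℕ) (hp : k + w.length ≤ p + 1) : w <:+: wordIter l m n p 0 := by
  have hlen : k + w.length ≤ (wordIter l m n p 0).length :=
    le_trans hp (length_wordIter l m n hlpos hlm p 0)
  have hpt : ∀ (j : ℕ) (hj : j < w.length), w[j] = limWord l m n 0 (k + j) := by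
    intro j hj
    have hcg := congrArg (fun t : List Bool => t.getD j false) hk
    rw [← List.getD_eq_getElem w false hj, hcg,
      List.getD_eq_getElem _ _ (by simpa using hj)]
    simp
  have hweq : w = ((wordIter l m n p 0).drop k).take w.length := by
    apply List.ext_getElem
    · simp only [List.length_take, List.length_drop]
      omega
    · intro j hj1 hj2
      rw [hpt j hj1]
      rw [List.getElem_take, List.getElem_drop]
      rw [← List.getD_eq_getElem _ false (show k + j < (wordIter l m n p 0).length by omega)]
      exact limWord_eq l m n hlpos hlm 0 (k + j) p (by omega)
  rw [hweq]
  exact List.infix_iff_prefix_suffix.mpr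
    ⟨(wordIter l m n p 0).drop k, List.take_prefix _ _, List.drop_suffix _ _⟩

omit hlpos hlm

lemma subComp_nil (i : ℕ) : ∀ h : ℕ, subComp l m n i h [] = [] := by
  induction i with
  | zero => intro h; rfl
  | succ i ih => intro h; simp [subComp, ih, subw]

lemma subComp_append (i : ℕ) : ∀ (h : ℕ) (a b : List Bool),
    subComp l m n i h (a ++ b) = subComp l m n i h a ++ subComp l m n i h b := by
  induction i with
  | zero => intro h a b; rfl
  | succ i ih => intro h a b; simp only [subComp, ih, subw_append]

lemma subComp_prefix (i h : ℕ) {a b : List Bool} (hab : a <+: b) :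
    subComp l m n i h a <+: subComp l m n i h b := by
  obtain ⟨t, rfl⟩ := hab
  exact ⟨subComp l m n i h t, (subComp_append l m n i h a t).symm⟩

lemma subComp_flatMap (i h : ℕ) (w : List Bool) :
    subComp l m n i h w = w.flatMap (fun c => subComp l m n i h [c]) := by
  induction w with
  | nil => simp [subComp_nil]
  | cons c t ih =>
    have hct : (c :: t : List Bool) = [c] ++ t := rfl
    rw [hct, subComp_append, List.flatMap_append, ← ih, List.flatMap_singleton]

lemma subComp_false (i : ℕ) : ∀ h : ℕ, subComp l m n i h [false] = wordIter l m n i h := by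
  induction i with
  | zero => intro h; rfl
  | succ i ih => intro h; simp only [subComp, wordIter, ih]

lemma wordIter_add (i : ℕ) : ∀ t h : ℕ,
    wordIter l m n (t + i) h = subComp l m n i h (wordIter l m n t (h + i)) := by
  induction i with
  | zero => intro t h; rfl
  | succ i ih =>
    intro t h
    have h1 : t + (i + 1) = (t + i) + 1 := rfl
    have h2 : wordIter l m n ((t + i) + 1) h = subw l m n h (wordIter l m n (t + i) (h + 1)) := rfl
    rw [h1, h2, ih t (h + 1)]
    have h3 : h + 1 + i = h + (i + 1) := by omega
    rw [h3]
    rfl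

lemma subComp_succ_right (i : ℕ) : ∀ (h : ℕ) (w : List Bool),
    subComp l m n (i + 1) h w = subComp l m n i h (subw l m n (h + i) w) := by
  induction i with
  | zero => intro h w; simp only [subComp, Nat.add_zero]
  | succ i ih =>
    intro h w
    have h1 : subComp l m n (i + 1 + 1) h w = subw l m n h (subComp l m n (i + 1) (h + 1) w) := rfl
    rw [h1, ih (h + 1) w]
    have h2 : h + 1 + i = h + (i + 1) := by omega
    rw [h2]
    rfl

lemma subw_false_prefix_true (hlm : ∀ i, l i < m i) (hmn : ∀ i, m i < n i) (h : ℕ) :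
    subw l m n h [false] <+: subw l m n h [true] := by
  have h1 : subw l m n h [false] = List.replicate (m h) false ++ List.replicate (l h) true := by
    simp [subw]
  have h2 : subw l m n h [true] = List.replicate (m h) false ++ List.replicate (n h) true := by
    simp [subw]
  rw [h1, h2]
  refine ⟨List.replicate (n h - l h) true, ?_⟩
  rw [List.append_assoc, ← List.replicate_add]
  have h3 : l h + (n h - l h) = n h := by have := hlm h; have := hmn h; omega
  rw [h3]

lemma UprefV (hlm : ∀ i, l i < m i) (hmn : ∀ i, m i < n i) (i h : ℕ) :
    subComp l m n (i + 1) h [false] <+: subComp l m n (i + 1) h [true] := by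
  rw [subComp_succ_right, subComp_succ_right]
  exact subComp_prefix l m n i h (subw_false_prefix_true l m n hlm hmn (h + i))

lemma key_lemma (f : Bool → List Bool) (U V : List Bool) (hU : U ≠ [])
    (hUV : U <+: V) (hf : ∀ c, f c = U ∨ f c = V) :
    ∀ (s : List Bool) (x : List Bool), x <:+: s.flatMap f →
      U.length + V.length ≤ x.length → U <:+: x := by
  have hUlen : 0 < U.length := List.length_pos_iff.mpr hU
  have hUVlen : U.length ≤ V.length := hUV.length_le
  intro s
  induction s with
  | nil =>
    intro x hx hlen
    rw [List.flatMap_nil, List.infix_nil] at hx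
    subst hx
    simp only [List.length_nil] at hlen
    omega
  | cons c s ih =>
    intro x hx hlen
    obtain ⟨a, b, hab⟩ := hx
    rw [List.flatMap_cons] at hab
    have hfc_le : (f c).length ≤ V.length := by
      rcases hf c with hh | hh
      · rw [hh]; exact hUVlen
      · rw [hh]
    rcases le_or_gt (f c).length a.length with hca | hca
    · have hpre : f c <+: a := by
        have h1 : (a ++ x ++ b).take (f c).length = f c := by
          rw [hab, List.take_left]
        rw [List.append_assoc, List.take_append_of_le_length hca] at h1
        rw [← h1]
        exact List.take_prefix _ _
      obtain ⟨a', rfl⟩ := hpre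
      apply ih x ?_ hlen
      refine ⟨a', b, ?_⟩
      have h2 : f c ++ (a' ++ (x ++ b)) = f c ++ s.flatMap f := by
        rw [← List.append_assoc, ← List.append_assoc]; exact hab
      have h3 := List.append_cancel_left h2
      rw [← List.append_assoc] at h3
      exact h3
    · cases s with
      | nil =>
        exfalso
        have h1 : (a ++ x ++ b).length = (f c).length := by rw [hab]; simp
        simp only [List.length_append] at h1
        omega
      | cons c' s' =>
        have hUrest : U <+: (c' :: s').flatMap f := by
          rw [List.flatMap_cons]
          have hUfc' : U <+: f c' := by
            rcases hf c' with hh | hh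
            · rw [hh]
            · rw [hh]; exact hUV
          exact hUfc'.trans (List.prefix_append _ _)
        have h2 : x ++ b = (f c).drop a.length ++ (c' :: s').flatMap f := by
          have h3 := congrArg (List.drop a.length) hab
          rw [List.append_assoc, List.drop_left,
            List.drop_append_of_le_length (le_of_lt hca)] at h3
          exact h3
        set d := (f c).length - a.length with hdd
        have hd : ((f c).drop a.length).length = d := by simp [hdd]
        have h3 : (x ++ b).drop d = (c' :: s').flatMap f := by
          rw [h2, ← hd, List.drop_left]
        have hUeq : U = ((x ++ b).drop d).take U.length := by
          rw [h3]
          exact List.prefix_iff_eq_take.mp hUrest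
        have hdx : d + U.length ≤ x.length := by omega
        rw [List.drop_append_of_le_length (by omega : d ≤ x.length)] at hUeq
        rw [List.take_append_of_le_length
          (by simp only [List.length_drop]; omega : U.length ≤ (x.drop d).length)] at hUeq
        rw [hUeq]
        exact List.infix_iff_prefix_suffix.mpr
          ⟨x.drop d, List.take_prefix _ _, List.drop_suffix _ _⟩

end Aux


private def vecMk (n₀ : ℕ) (v : List Bool) (h : v.length = n₀) : List.Vector Bool n₀ := ⟨v, h⟩

theorem stmt9 (l m n : ℕ → ℕ) (hlmono : StrictMono l) (hmmono : StrictMono m)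
    (hnmono : StrictMono n) (hlpos : ∀ i, 0 < l i)
    (hlm : ∀ i, l i < m i) (hmn : ∀ i, m i < n i) (n₀ : ℕ) :
    ∃ N : ℕ, ∀ w : List Bool, IsFactor (limWord l m n 0) w → w.length = N →
      ∀ v : List Bool, IsFactor (limWord l m n 0) v → v.length = n₀ → v <:+: w := by
  classical
  set F : List.Vector Bool n₀ → ℕ := fun x =>
    if h : IsFactor (limWord l m n 0) x.toList then h.choose else 0 with hF
  set K : ℕ := Finset.univ.sup F with hK
  set i : ℕ := K + n₀ + 1 with hi
  set U : List Bool := wordIter l m n i 0 with hU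
  set V : List Bool := subComp l m n i 0 [true] with hV
  refine ⟨U.length + V.length, ?_⟩
  intro w hw hwlen v hv hvlen
  -- v is an infix of U
  have hvU : v <:+: U := by
    have hx : IsFactor (limWord l m n 0) (vecMk n₀ v hvlen).toList := hv
    have hxK : hx.choose ≤ K := by
      have h1 : F (vecMk n₀ v hvlen) = hx.choose := by simp only [hF]; exact dif_pos hx
      rw [← h1, hK]
      exact Finset.le_sup (f := F) (Finset.mem_univ (vecMk n₀ v hvlen))
    have spec : v = (List.range v.length).map fun j => limWord l m n 0 (hx.choose + j) :=
      hx.choose_spec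
    rw [hU]
    exact factor_infix l m n hlpos hlm spec i (by rw [hvlen]; omega)
  -- U is an infix of w
  have hUw : U <:+: w := by
    obtain ⟨kw, hkw⟩ := hw
    set t : ℕ := kw + w.length with ht
    have hwinf : w <:+: wordIter l m n (t + i) 0 :=
      factor_infix l m n hlpos hlm hkw (t + i) (by omega)
    rw [wordIter_add l m n i t 0, Nat.zero_add, subComp_flatMap] at hwinf
    have hUne : U ≠ [] := by
      have := length_wordIter l m n hlpos hlm i 0
      rw [hU]
      exact List.ne_nil_of_length_pos (by omega)
    have hUVp : U <+: V := by
      rw [hU, hV, ← subComp_false l m n i 0, hi]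
      exact UprefV l m n hlm hmn (K + n₀) 0
    have hf : ∀ c, subComp l m n i 0 [c] = U ∨ subComp l m n i 0 [c] = V := by
      intro c
      cases c
      · left; rw [hU, subComp_false l m n i 0]
      · right; rw [hV]
    exact key_lemma (fun c => subComp l m n i 0 [c]) U V hUne hUVp hf
      (wordIter l m n t i) w hwinf (le_of_eq hwlen.symm)
  exact hvU.trans hUw
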